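/- Every nonabelian free group F is a domain: every nontrivial normal subgroup of F has trivial centralizer. -/

import Mathlib

open FreeGroup

private lemma eq_of_free_comm {β : Type*} {x y : β}
    (h : FreeGroup.of x * FreeGroup.of y = FreeGroup.of y * FreeGroup.of x) : x = y := by
  classical
  have key : ∀ u v : β, FreeGroup.of u * FreeGroup.of v =
      FreeGroup.mk [(u, true), (v, true)] := by
    intro u v
    rw [show FreeGroup.of u = FreeGroup.mk [(u, true)] from rfl,
        show FreeGroup.of v = FreeGroup.mk [(v, true)] from rfl, FreeGroup.mul_mk]
    rfl
  have hred : ∀ u v : β, FreeGroup.reduce [(u, true), (v, true)] = [(u, true), (v, true)] := by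
    intro u v
    rw [FreeGroup.reduce.cons, FreeGroup.reduce_singleton]
    simp
  have h2 := congrArg FreeGroup.toWord (key x y ▸ (key y x ▸ h))
  rw [FreeGroup.toWord_mk, FreeGroup.toWord_mk, hred, hred] at h2
  injection h2 with h3 _
  exact congrArg Prod.fst h3

private lemma abelian_subgroup_cyclic {α : Type*} (H : Subgroup (FreeGroup α))
    (hcomm : ∀ x ∈ H, ∀ y ∈ H, x * y = y * x) (hbot : H ≠ ⊥) :
    ∃ z : FreeGroup α, z ∈ H ∧ (∀ x ∈ H, ∃ k : ℤ, x = z ^ k) ∧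
      (∀ m n : ℤ, z ^ m = z ^ n → m = n) := by
  classical
  obtain ⟨⟨x, hxH⟩, hx1⟩ := Subgroup.ne_bot_iff_exists_ne_one.mp hbot
  let e : H ≃* FreeGroup (IsFreeGroup.Generators H) := IsFreeGroup.toFreeGroup H
  have hHcomm : ∀ u v : H, u * v = v * u := by
    intro u v
    exact Subtype.ext (hcomm u u.2 v v.2)
  have hFScomm : ∀ p q : FreeGroup (IsFreeGroup.Generators H), p * q = q * p := by
    intro p q
    have : e (e.symm p * e.symm q) = e (e.symm q * e.symm p) := by
      rw [hHcomm]
    simpa using this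
  have hsub : ∀ s t : IsFreeGroup.Generators H, s = t := by
    intro s t
    exact eq_of_free_comm (hFScomm (FreeGroup.of s) (FreeGroup.of t))
  have hSne : Nonempty (IsFreeGroup.Generators H) := by
    by_contra hS
    rw [not_nonempty_iff] at hS
    have : (e ⟨x, hxH⟩).toWord = [] := by
      cases hl : (e ⟨x, hxH⟩).toWord with
      | nil => rfl
      | cons p _ => exact (hS.false p.1).elim
    have : e ⟨x, hxH⟩ = 1 := FreeGroup.toWord_eq_nil_iff.mp this
    have : (⟨x, hxH⟩ : H) = 1 := by
      apply e.injective
      simpa using this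
    exact hx1 this
  obtain ⟨s₀⟩ := hSne
  let ψ : FreeGroup (IsFreeGroup.Generators H) →* Multiplicative ℤ :=
    FreeGroup.lift (fun _ => Multiplicative.ofAdd 1)
  have hcyc : ∀ p : FreeGroup (IsFreeGroup.Generators H),
      ∃ k : ℤ, p = (FreeGroup.of s₀) ^ k := by
    intro p
    induction p using FreeGroup.induction_on with
    | C1 => exact ⟨0, (zpow_zero _).symm⟩
    | of t => exact ⟨1, by rw [hsub t s₀, zpow_one]⟩
    | inv_of t _ =>
      exact ⟨-1, by rw [hsub t s₀, zpow_neg, zpow_one]⟩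
    | mul p q hp hq =>
      obtain ⟨k, hk⟩ := hp
      obtain ⟨l, hl⟩ := hq
      exact ⟨k + l, by rw [hk, hl, zpow_add]⟩
  have hψpow : ∀ k : ℤ, ψ ((FreeGroup.of s₀) ^ k) = Multiplicative.ofAdd k := by
    intro k
    rw [map_zpow]
    simp only [ψ, FreeGroup.lift_apply_of]
    rw [← ofAdd_zsmul, smul_eq_mul, mul_one]
  refine ⟨(e.symm (FreeGroup.of s₀) : FreeGroup α), (e.symm (FreeGroup.of s₀)).2, ?_, ?_⟩
  · intro y hy
    obtain ⟨k, hk⟩ := hcyc (e ⟨y, hy⟩)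
    refine ⟨k, ?_⟩
    have : (⟨y, hy⟩ : H) = (e.symm (FreeGroup.of s₀)) ^ k := by
      apply e.injective
      rw [map_zpow]
      simpa using hk
    calc y = ((⟨y, hy⟩ : H) : FreeGroup α) := rfl
      _ = _ := by rw [this]; push_cast; rfl
  · intro m n hmn
    have : (e.symm (FreeGroup.of s₀)) ^ m = (e.symm (FreeGroup.of s₀)) ^ n :=
      Subtype.ext (by push_cast; exact hmn)
    have h2 : (FreeGroup.of s₀ : FreeGroup (IsFreeGroup.Generators H)) ^ m
        = FreeGroup.of s₀ ^ n := by
      have := congrArg e this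
      rwa [map_zpow, map_zpow, MulEquiv.apply_symm_apply] at this
    have h3 := congrArg ψ h2
    rw [hψpow, hψpow] at h3
    exact h3

private lemma conj_zpow' {G : Type*} [Group G] (x u : G) (d : ℤ) :
    (x * u * x⁻¹) ^ d = x * u ^ d * x⁻¹ := by
  rw [← MulAut.conj_apply, ← map_zpow, MulAut.conj_apply]

private lemma common_power {α : Type*} {u v : FreeGroup α} (hu : u ≠ 1) (hv : v ≠ 1)
    (h : u * v = v * u) : ∃ m n : ℤ, m ≠ 0 ∧ n ≠ 0 ∧ u ^ m = v ^ n ∧ u ^ m ≠ 1 := by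
  set H := Subgroup.closure ({u, v} : Set (FreeGroup α)) with hH
  have hpair : ∀ x ∈ ({u, v} : Set (FreeGroup α)), ∀ y ∈ ({u, v} : Set (FreeGroup α)),
      x * y = y * x := by
    rintro x (rfl | rfl) y (rfl | rfl) <;> first | rfl | exact h | exact h.symm
  have hcomm : ∀ x ∈ H, ∀ y ∈ H, x * y = y * x := by
    intro x hx y hy
    exact Subgroup.closure_induction₂
      (fun p q hp hq => hpair p hp q hq)
      (by simp) (by simp)
      (fun p q r _ _ _ h1 h2 => by rw [mul_assoc, h2, ← mul_assoc, h1, mul_assoc])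
      (fun p q r _ _ _ h1 h2 => by rw [← mul_assoc, h1, mul_assoc, h2, ← mul_assoc])
      (fun p q _ _ h1 => Commute.inv_left h1)
      (fun p q _ _ h1 => Commute.inv_right h1)
      hx hy
  have humem : u ∈ H := Subgroup.subset_closure (by simp)
  have hvmem : v ∈ H := Subgroup.subset_closure (by simp)
  have hbot : H ≠ ⊥ := by
    intro hb
    exact hu (by simpa [hb, Subgroup.mem_bot] using humem)
  obtain ⟨z, _, hpow, hinj⟩ := abelian_subgroup_cyclic H hcomm hbot
  obtain ⟨i, hi⟩ := hpow u humem
  obtain ⟨j, hj⟩ := hpow v hvmem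
  have hi0 : i ≠ 0 := fun h0 => hu (by rw [hi, h0, zpow_zero])
  have hj0 : j ≠ 0 := fun h0 => hv (by rw [hj, h0, zpow_zero])
  refine ⟨j, i, hj0, hi0, ?_, ?_⟩
  · rw [hi, hj, ← zpow_mul, ← zpow_mul, mul_comm]
  · rw [hi, ← zpow_mul]
    intro h1
    have := hinj (i * j) 0 (by rw [h1, zpow_zero])
    exact (mul_ne_zero hi0 hj0) this

theorem stmt13 {α : Type*} (a b : α) (hab : a ≠ b) :
    ∀ K : Subgroup (FreeGroup α), K.Normal → K ≠ ⊥ →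
      Subgroup.centralizer (K : Set (FreeGroup α)) = ⊥ := by
  classical
  intro K hKnormal hKbot
  rw [eq_bot_iff]
  intro g hg
  rw [Subgroup.mem_bot]
  by_contra hg1
  obtain ⟨⟨k, hkK⟩, hk1'⟩ := Subgroup.ne_bot_iff_exists_ne_one.mp hKbot
  have hk1 : k ≠ 1 := fun h => hk1' (Subtype.ext h)
  have hgk : g * k = k * g := (Subgroup.mem_centralizer_iff.mp hg k hkK).symm
  obtain ⟨m, n, hm0, hn0, hw, hwne⟩ := common_power hg1 hk1 hgk
  set w := g ^ m with hwdef
  have hwK : w ∈ K := by rw [hw]; exact K.zpow_mem hkK n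
  have hwC : w ∈ Subgroup.centralizer (K : Set (FreeGroup α)) :=
    Subgroup.zpow_mem _ hg m
  -- the centralizer of a normal subgroup is closed under conjugation
  have hCconj : ∀ x c, c ∈ Subgroup.centralizer (K : Set (FreeGroup α)) →
      x * c * x⁻¹ ∈ Subgroup.centralizer (K : Set (FreeGroup α)) := by
    intro x c hc
    rw [Subgroup.mem_centralizer_iff]
    intro y hy
    have hy' : x⁻¹ * y * x ∈ K := by
      have := hKnormal.conj_mem y hy x⁻¹
      rwa [inv_inv] at this
    have h1 : (x⁻¹ * y * x) * c = c * (x⁻¹ * y * x) :=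
      Subgroup.mem_centralizer_iff.mp hc _ hy'
    calc y * (x * c * x⁻¹) = x * ((x⁻¹ * y * x) * c) * x⁻¹ := by group
      _ = x * (c * (x⁻¹ * y * x)) * x⁻¹ := by rw [h1]
      _ = (x * c * x⁻¹) * y := by group
  -- all conjugates of w commute
  have hconj : ∀ x y : FreeGroup α,
      (x * w * x⁻¹) * (y * w * y⁻¹) = (y * w * y⁻¹) * (x * w * x⁻¹) := fun x y =>
    (Subgroup.mem_centralizer_iff.mp (hCconj x w hwC) _ (hKnormal.conj_mem w hwK y)).symm
  set M := Subgroup.normalClosure ({w} : Set (FreeGroup α)) with hM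
  have hwM : w ∈ M := Subgroup.subset_normalClosure (Set.mem_singleton w)
  have hMbot : M ≠ ⊥ := fun hb => hwne (by simpa [hb, Subgroup.mem_bot] using hwM)
  have hpairM : ∀ p ∈ Group.conjugatesOfSet ({w} : Set (FreeGroup α)),
      ∀ q ∈ Group.conjugatesOfSet ({w} : Set (FreeGroup α)), p * q = q * p := by
    intro p hp q hq
    rw [Group.mem_conjugatesOfSet_iff] at hp hq
    obtain ⟨w1, hw1, hcp⟩ := hp
    obtain ⟨w2, hw2, hcq⟩ := hq
    rw [Set.mem_singleton_iff] at hw1 hw2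
    subst hw1; subst hw2
    obtain ⟨x, hx⟩ := isConj_iff.mp hcp
    obtain ⟨y, hy⟩ := isConj_iff.mp hcq
    rw [← hx, ← hy]
    exact hconj x y
  have hMcomm : ∀ x ∈ M, ∀ y ∈ M, x * y = y * x := by
    intro x hx y hy
    exact Subgroup.closure_induction₂
      (fun p q hp hq => hpairM p hp q hq)
      (by simp) (by simp)
      (fun p q r _ _ _ h1 h2 => by rw [mul_assoc, h2, ← mul_assoc, h1, mul_assoc])
      (fun p q r _ _ _ h1 h2 => by rw [← mul_assoc, h1, mul_assoc, h2, ← mul_assoc])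
      (fun p q _ _ h1 => Commute.inv_left h1)
      (fun p q _ _ h1 => Commute.inv_right h1)
      hx hy
  obtain ⟨z₀, hz₀M, hpowM, hinjM⟩ := abelian_subgroup_cyclic M hMcomm hMbot
  have hz₀ne : z₀ ≠ 1 := by
    intro h
    obtain ⟨k0, hk0⟩ := hpowM w hwM
    exact hwne (by rw [hk0, h, one_zpow])
  -- squares commute with z₀
  have hsq : ∀ x : FreeGroup α, (x * x) * z₀ * (x * x)⁻¹ = z₀ := by
    intro x
    obtain ⟨d, hd⟩ := hpowM (x * z₀ * x⁻¹) (Subgroup.normalClosure_normal.conj_mem z₀ hz₀M x)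
    obtain ⟨e, he⟩ := hpowM (x⁻¹ * z₀ * x)
      (by have := Subgroup.normalClosure_normal.conj_mem z₀ hz₀M x⁻¹; rwa [inv_inv] at this)
    have hde : z₀ ^ (1 : ℤ) = z₀ ^ (e * d) := by
      rw [zpow_one]
      calc z₀ = x⁻¹ * (x * z₀ * x⁻¹) * x := by group
        _ = x⁻¹ * z₀ ^ d * x := by rw [← hd]
        _ = (x⁻¹ * z₀ * x⁻¹⁻¹) ^ d := by rw [conj_zpow', inv_inv]
        _ = (x⁻¹ * z₀ * x) ^ d := by rw [inv_inv]
        _ = (z₀ ^ e) ^ d := by rw [he]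
        _ = z₀ ^ (e * d) := by rw [← zpow_mul]
    have hed : e * d = 1 := (hinjM 1 (e * d) hde).symm
    have hd1 : d = 1 ∨ d = -1 :=
      Int.isUnit_iff.mp (IsUnit.of_mul_eq_one (a := d) e (by rw [mul_comm]; exact hed))
    have hkey : (x * x) * z₀ * (x * x)⁻¹ = z₀ ^ (d * d) := by
      calc (x * x) * z₀ * (x * x)⁻¹ = x * (x * z₀ * x⁻¹) * x⁻¹ := by group
        _ = x * z₀ ^ d * x⁻¹ := by rw [hd]
        _ = (x * z₀ * x⁻¹) ^ d := by rw [conj_zpow']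
        _ = (z₀ ^ d) ^ d := by rw [hd]
        _ = z₀ ^ (d * d) := by rw [← zpow_mul]
    rw [hkey]
    rcases hd1 with h | h <;> rw [h] <;> norm_num
  -- squares of generators are nontrivial
  have hletter : ∀ c : α, FreeGroup.of c * FreeGroup.of c ≠ 1 := by
    intro c h
    set φc := FreeGroup.lift (fun x : α => if x = c then Multiplicative.ofAdd (1 : ℤ) else 1)
      with hφc
    have hc1 : φc (FreeGroup.of c) = Multiplicative.ofAdd 1 := by
      rw [hφc, FreeGroup.lift_apply_of, if_pos rfl]
    have := congrArg φc h
    rw [_root_.map_mul, hc1, MonoidHom.map_one] at this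
    have h2 := congrArg Multiplicative.toAdd this
    simp only [toAdd_mul, toAdd_ofAdd, toAdd_one] at h2
    omega
  have hsa : (FreeGroup.of a * FreeGroup.of a) * z₀ = z₀ * (FreeGroup.of a * FreeGroup.of a) :=
    mul_inv_eq_iff_eq_mul.mp (hsq (FreeGroup.of a))
  have hsb : (FreeGroup.of b * FreeGroup.of b) * z₀ = z₀ * (FreeGroup.of b * FreeGroup.of b) :=
    mul_inv_eq_iff_eq_mul.mp (hsq (FreeGroup.of b))
  obtain ⟨m₁, n₁, hm₁, hn₁, h₁, -⟩ := common_power (hletter a) hz₀ne hsa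
  obtain ⟨m₂, n₂, hm₂, hn₂, h₂, -⟩ := common_power (hletter b) hz₀ne hsb
  have hfin : (FreeGroup.of a * FreeGroup.of a) ^ (m₁ * n₂)
      = (FreeGroup.of b * FreeGroup.of b) ^ (m₂ * n₁) := by
    rw [zpow_mul, zpow_mul, h₁, h₂, ← zpow_mul, ← zpow_mul, mul_comm]
  set φ := FreeGroup.lift (fun x : α => if x = a then Multiplicative.ofAdd (1 : ℤ) else 1)
    with hφ
  have hφa : φ (FreeGroup.of a) = Multiplicative.ofAdd 1 := by
    rw [hφ, FreeGroup.lift_apply_of, if_pos rfl]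
  have hφb : φ (FreeGroup.of b) = 1 := by
    rw [hφ, FreeGroup.lift_apply_of, if_neg (Ne.symm hab)]
  have := congrArg φ hfin
  rw [map_zpow, map_zpow, _root_.map_mul, _root_.map_mul, hφa, hφb, one_mul, one_zpow] at this
  have h2 := congrArg Multiplicative.toAdd this
  simp only [toAdd_zpow, toAdd_mul, toAdd_ofAdd, toAdd_one, smul_eq_mul] at h2
  have : m₁ * n₂ * (1 + 1) = 0 := by linarith [h2]
  have hne : m₁ * n₂ * (1 + 1) ≠ 0 :=
    mul_ne_zero (mul_ne_zero hm₁ hn₂) (by norm_num)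
  exact hne this
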